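/- Let N, d ≥ 1. Let f : ℝ^d → ℝ^d be odd and one-sided Lipschitz with constant L_f ∈ ℝ, and let u be such that x ↦ u(x, μ) is one-sided Lipschitz with constant L_u ∈ ℝ for every probability measure μ and u is Lipschitz along empirical measures with constant L_ũ ≥ 0. Set Γ₂ := 4 L_f⁺ + 2 L_u + L_ũ + 1 with L_f⁺ := max{L_f, 0}, and let h > 0 satisfy Γ₂ h < 1. If (X, Y) and (X', Y') are implicit Euler step pairs in (ℝ^d)^N × (ℝ^d)^N, then ∑_{i=1}^N |Y_i − Y'_i|² ≤ ∑_{i=1}^N |X_i − X'_i|² / (1 − Γ₂ h). Equivalently, the map sending the input X of the implicit Euler step to its solution Y is globally Lipschitz on (ℝ^d)^N with Lipschitz constant (1 − Γ₂ h)^{−1/2}. -/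

import Mathlib

open RealInnerProductSpace MeasureTheory

/-- The empirical measure `μ^a := (1/N) ∑_{j=1}^N δ_{a_j}` of an `N`-tuple of points. -/
noncomputable def empMeas {d N : ℕ} (a : Fin N → EuclideanSpace ℝ (Fin d)) :
    Measure (EuclideanSpace ℝ (Fin d)) :=
  (N : ENNReal)⁻¹ • ∑ j, Measure.dirac (a j)

/-- The interaction drift `v` evaluated along an empirical measure:
`v(x, μ^a) = u(x, μ^a) + (1/N) ∑_j f(x − a_j)`. -/
noncomputable def vEmp {d N : ℕ}
    (f : EuclideanSpace ℝ (Fin d) → EuclideanSpace ℝ (Fin d))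
    (u : EuclideanSpace ℝ (Fin d) → Measure (EuclideanSpace ℝ (Fin d)) →
      EuclideanSpace ℝ (Fin d))
    (x : EuclideanSpace ℝ (Fin d)) (a : Fin N → EuclideanSpace ℝ (Fin d)) :
    EuclideanSpace ℝ (Fin d) :=
  u x (empMeas a) + (N : ℝ)⁻¹ • ∑ j, f (x - a j)

/-- `(X, Y)` is an implicit Euler step pair with step size `h` if
`Yᵢ = Xᵢ + h·v(Yᵢ, μ^Y)` for every `i`. -/
def IsImplicitPair {d N : ℕ}
    (f : EuclideanSpace ℝ (Fin d) → EuclideanSpace ℝ (Fin d))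
    (u : EuclideanSpace ℝ (Fin d) → Measure (EuclideanSpace ℝ (Fin d)) →
      EuclideanSpace ℝ (Fin d))
    (h : ℝ) (X Y : Fin N → EuclideanSpace ℝ (Fin d)) : Prop :=
  ∀ i, Y i = X i + h • vEmp f u (Y i) Y

lemma empProb {d N : ℕ} (hN : 1 ≤ N) (a : Fin N → EuclideanSpace ℝ (Fin d)) :
    IsProbabilityMeasure (empMeas a) := by
  constructor
  have hN0 : (N : ENNReal) ≠ 0 := by exact_mod_cast Nat.one_le_iff_ne_zero.mp hN
  simp [empMeas, Measure.smul_apply, Measure.finset_sum_apply, ENNReal.inv_mul_cancel hN0]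

set_option maxHeartbeats 1000000 in
/-- Lipschitz stability of the implicit Euler step: for two implicit Euler
step pairs `(X, Y)` and `(X', Y')` with `Γ₂·h < 1` where `Γ₂ = 4L_f⁺ + 2L_u + L_ũ + 1`,
`∑ᵢ ‖Yᵢ − Y'ᵢ‖² ≤ ∑ᵢ ‖Xᵢ − X'ᵢ‖² / (1 − Γ₂h)`. -/
theorem implicit_step_stability (d N : ℕ) (hd : 1 ≤ d) (hN : 1 ≤ N)
    (f : EuclideanSpace ℝ (Fin d) → EuclideanSpace ℝ (Fin d))
    (u : EuclideanSpace ℝ (Fin d) → Measure (EuclideanSpace ℝ (Fin d)) →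
      EuclideanSpace ℝ (Fin d))
    (Lf Lu Lut : ℝ) (hLut : 0 ≤ Lut)
    (hodd : ∀ z : EuclideanSpace ℝ (Fin d), f (-z) = -f z)
    (hf : ∀ z z' : EuclideanSpace ℝ (Fin d), ⟪z - z', f z - f z'⟫ ≤ Lf * ‖z - z'‖ ^ 2)
    (hu : ∀ μ : Measure (EuclideanSpace ℝ (Fin d)), IsProbabilityMeasure μ →
      ∀ x x' : EuclideanSpace ℝ (Fin d), ⟪x - x', u x μ - u x' μ⟫ ≤ Lu * ‖x - x'‖ ^ 2)
    (huemp : ∀ (x : EuclideanSpace ℝ (Fin d)) (a b : Fin N → EuclideanSpace ℝ (Fin d)),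
      ‖u x (empMeas a) - u x (empMeas b)‖ ^ 2 ≤ Lut / N * ∑ j, ‖a j - b j‖ ^ 2)
    (h : ℝ) (hh0 : 0 < h)
    (hh : (4 * max Lf 0 + 2 * Lu + Lut + 1) * h < 1)
    (X Y X' Y' : Fin N → EuclideanSpace ℝ (Fin d))
    (hXY : IsImplicitPair f u h X Y) (hXY' : IsImplicitPair f u h X' Y') :
    ∑ i, ‖Y i - Y' i‖ ^ 2 ≤
      (∑ i, ‖X i - X' i‖ ^ 2) / (1 - (4 * max Lf 0 + 2 * Lu + Lut + 1) * h) := by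
  have hNR : (0:ℝ) < N := by exact_mod_cast hN
  set S : ℝ := ∑ i, ‖Y i - Y' i‖ ^ 2 with hS
  set D : ℝ := ∑ i, ‖X i - X' i‖ ^ 2 with hD
  have hS0 : 0 ≤ S := Finset.sum_nonneg fun i _ => sq_nonneg _
  -- decomposition of drift difference
  have hv : ∀ i, vEmp f u (Y i) Y - vEmp f u (Y' i) Y' =
      (u (Y i) (empMeas Y) - u (Y' i) (empMeas Y))
      + (u (Y' i) (empMeas Y) - u (Y' i) (empMeas Y'))
      + (N : ℝ)⁻¹ • ∑ j, (f (Y i - Y j) - f (Y' i - Y' j)) := by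
    intro i
    rw [Finset.sum_sub_distrib, smul_sub]
    unfold vEmp
    abel
  -- key pointwise identity
  have key : ∀ i, ‖Y i - Y' i‖ ^ 2 = ⟪Y i - Y' i, X i - X' i⟫
      + h * ⟪Y i - Y' i, vEmp f u (Y i) Y - vEmp f u (Y' i) Y'⟫ := by
    intro i
    have e : Y i - Y' i = (X i - X' i)
        + h • (vEmp f u (Y i) Y - vEmp f u (Y' i) Y') := by
      rw [smul_sub]
      conv_lhs => rw [hXY i, hXY' i]
      abel
    have expand : ⟪Y i - Y' i, (X i - X' i)
        + h • (vEmp f u (Y i) Y - vEmp f u (Y' i) Y')⟫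
        = ⟪Y i - Y' i, X i - X' i⟫
          + h * ⟪Y i - Y' i, vEmp f u (Y i) Y - vEmp f u (Y' i) Y'⟫ := by
      rw [inner_add_right, real_inner_smul_right]
    rw [← expand, ← e, real_inner_self_eq_norm_sq]
  -- bound A
  have hA : ∑ i, ⟪Y i - Y' i, u (Y i) (empMeas Y) - u (Y' i) (empMeas Y)⟫ ≤ Lu * S := by
    rw [hS, Finset.mul_sum]
    exact Finset.sum_le_sum fun i _ => hu _ (empProb hN Y) _ _
  -- bound B
  have hB : ∑ i, ⟪Y i - Y' i, u (Y' i) (empMeas Y) - u (Y' i) (empMeas Y')⟫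
      ≤ (1/2) * S + (1/2) * (Lut * S) := by
    have hBi : ∀ i ∈ Finset.univ, ⟪Y i - Y' i, u (Y' i) (empMeas Y) - u (Y' i) (empMeas Y')⟫
        ≤ (1/2) * ‖Y i - Y' i‖ ^ 2 + (1/2) * (Lut / N * S) := by
      intro i _
      have h1 := real_inner_le_norm (Y i - Y' i) (u (Y' i) (empMeas Y) - u (Y' i) (empMeas Y'))
      have h2 := huemp (Y' i) Y Y'
      rw [← hS] at h2
      nlinarith [sq_nonneg (‖Y i - Y' i‖ - ‖u (Y' i) (empMeas Y) - u (Y' i) (empMeas Y')‖)]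
    calc ∑ i, ⟪Y i - Y' i, u (Y' i) (empMeas Y) - u (Y' i) (empMeas Y')⟫
        ≤ ∑ i, ((1/2) * ‖Y i - Y' i‖ ^ 2 + (1/2) * (Lut / N * S)) :=
          Finset.sum_le_sum hBi
      _ = (1/2) * S + (1/2) * (Lut * S) := by
          rw [Finset.sum_add_distrib, ← Finset.mul_sum, ← hS, Finset.sum_const,
            Finset.card_univ, Fintype.card_fin, nsmul_eq_mul]
          field_simp
  -- bound C (symmetrization)
  have hC : ∑ i, ⟪Y i - Y' i, (N : ℝ)⁻¹ • ∑ j, (f (Y i - Y j) - f (Y' i - Y' j))⟫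
      ≤ 2 * max Lf 0 * S := by
    have hFanti : ∀ i j : Fin N, f (Y j - Y i) - f (Y' j - Y' i)
        = -(f (Y i - Y j) - f (Y' i - Y' j)) := by
      intro i j
      have e1 : Y j - Y i = -(Y i - Y j) := by abel
      have e2 : Y' j - Y' i = -(Y' i - Y' j) := by abel
      rw [e1, e2, hodd, hodd]
      abel
    set T : ℝ := ∑ i, ∑ j, ⟪Y i - Y' i, f (Y i - Y j) - f (Y' i - Y' j)⟫ with hT
    have per : ∀ i j : Fin N,
        ⟪Y i - Y' i, f (Y i - Y j) - f (Y' i - Y' j)⟫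
        + ⟪Y j - Y' j, f (Y j - Y i) - f (Y' j - Y' i)⟫
        ≤ max Lf 0 * (2 * ‖Y i - Y' i‖ ^ 2 + 2 * ‖Y j - Y' j‖ ^ 2) := by
      intro i j
      have e3 : (Y i - Y j) - (Y' i - Y' j) = (Y i - Y' i) - (Y j - Y' j) := by abel
      have h1 := hf (Y i - Y j) (Y' i - Y' j)
      rw [e3] at h1
      have h2 : ⟪Y i - Y' i, f (Y i - Y j) - f (Y' i - Y' j)⟫
          + ⟪Y j - Y' j, f (Y j - Y i) - f (Y' j - Y' i)⟫
          = ⟪(Y i - Y' i) - (Y j - Y' j), f (Y i - Y j) - f (Y' i - Y' j)⟫ := by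
        rw [hFanti i j, inner_neg_right, ← sub_eq_add_neg, ← inner_sub_left]
      rw [h2]
      have h3 : Lf * ‖(Y i - Y' i) - (Y j - Y' j)‖ ^ 2
          ≤ max Lf 0 * ‖(Y i - Y' i) - (Y j - Y' j)‖ ^ 2 :=
        mul_le_mul_of_nonneg_right (le_max_left _ _) (sq_nonneg _)
      have h4 : ‖(Y i - Y' i) - (Y j - Y' j)‖ ^ 2
          ≤ 2 * ‖Y i - Y' i‖ ^ 2 + 2 * ‖Y j - Y' j‖ ^ 2 := by
        have h5 := norm_sub_le (Y i - Y' i) (Y j - Y' j)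
        nlinarith [norm_nonneg (Y i - Y' i), norm_nonneg (Y j - Y' j),
          norm_nonneg ((Y i - Y' i) - (Y j - Y' j)), sq_nonneg (‖Y i - Y' i‖ - ‖Y j - Y' j‖)]
      have h6 : (0:ℝ) ≤ max Lf 0 := le_max_right _ _
      nlinarith [mul_le_mul_of_nonneg_left h4 h6]
    have h2T : 2 * T ≤ 4 * max Lf 0 * ((N:ℝ) * S) := by
      have hTsplit : 2 * T = ∑ i, ∑ j,
          (⟪Y i - Y' i, f (Y i - Y j) - f (Y' i - Y' j)⟫
          + ⟪Y j - Y' j, f (Y j - Y i) - f (Y' j - Y' i)⟫) := by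
        rw [two_mul]
        nth_rw 2 [hT]
        rw [Finset.sum_comm]
        rw [← Finset.sum_add_distrib]
        exact congrArg _ (funext fun i => (Finset.sum_add_distrib).symm)
      rw [hTsplit]
      calc ∑ i, ∑ j, (⟪Y i - Y' i, f (Y i - Y j) - f (Y' i - Y' j)⟫
              + ⟪Y j - Y' j, f (Y j - Y i) - f (Y' j - Y' i)⟫)
          ≤ ∑ i, ∑ j, max Lf 0 * (2 * ‖Y i - Y' i‖ ^ 2 + 2 * ‖Y j - Y' j‖ ^ 2) :=
            Finset.sum_le_sum fun i _ => Finset.sum_le_sum fun j _ => per i j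
        _ = 4 * max Lf 0 * ((N:ℝ) * S) := by
            simp only [← Finset.mul_sum, Finset.sum_add_distrib, Finset.sum_const,
              Finset.card_univ, Fintype.card_fin, nsmul_eq_mul, ← hS]
            ring
    have hCL : ∑ i, ⟪Y i - Y' i, (N : ℝ)⁻¹ • ∑ j, (f (Y i - Y j) - f (Y' i - Y' j))⟫
        = (N:ℝ)⁻¹ * T := by
      rw [hT, Finset.mul_sum]
      refine Finset.sum_congr rfl fun i _ => ?_
      rw [real_inner_smul_right, inner_sum]
    rw [hCL]
    rw [inv_mul_le_iff₀ hNR]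
    nlinarith
  -- combine
  have hVi : ∀ i, ⟪Y i - Y' i, vEmp f u (Y i) Y - vEmp f u (Y' i) Y'⟫
      = ⟪Y i - Y' i, u (Y i) (empMeas Y) - u (Y' i) (empMeas Y)⟫
      + ⟪Y i - Y' i, u (Y' i) (empMeas Y) - u (Y' i) (empMeas Y')⟫
      + ⟪Y i - Y' i, (N : ℝ)⁻¹ • ∑ j, (f (Y i - Y j) - f (Y' i - Y' j))⟫ := by
    intro i
    rw [hv i, inner_add_right, inner_add_right]
  have hV : ∑ i, ⟪Y i - Y' i, vEmp f u (Y i) Y - vEmp f u (Y' i) Y'⟫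
      ≤ (2 * max Lf 0 + Lu + Lut / 2 + 1/2) * S := by
    calc ∑ i, ⟪Y i - Y' i, vEmp f u (Y i) Y - vEmp f u (Y' i) Y'⟫
        = ∑ i, ⟪Y i - Y' i, u (Y i) (empMeas Y) - u (Y' i) (empMeas Y)⟫
          + ∑ i, ⟪Y i - Y' i, u (Y' i) (empMeas Y) - u (Y' i) (empMeas Y')⟫
          + ∑ i, ⟪Y i - Y' i, (N : ℝ)⁻¹ • ∑ j, (f (Y i - Y j) - f (Y' i - Y' j))⟫ := by
          rw [← Finset.sum_add_distrib, ← Finset.sum_add_distrib]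
          exact Finset.sum_congr rfl fun i _ => hVi i
      _ ≤ Lu * S + ((1/2) * S + (1/2) * (Lut * S)) + 2 * max Lf 0 * S := by
          exact add_le_add (add_le_add hA hB) hC
      _ = (2 * max Lf 0 + Lu + Lut / 2 + 1/2) * S := by ring
  have hW : ∑ i, ⟪Y i - Y' i, X i - X' i⟫ ≤ (1/2) * S + (1/2) * D := by
    calc ∑ i, ⟪Y i - Y' i, X i - X' i⟫
        ≤ ∑ i, ((1/2) * ‖Y i - Y' i‖ ^ 2 + (1/2) * ‖X i - X' i‖ ^ 2) := by
          refine Finset.sum_le_sum fun i _ => ?_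
          have h1 := real_inner_le_norm (Y i - Y' i) (X i - X' i)
          nlinarith [sq_nonneg (‖Y i - Y' i‖ - ‖X i - X' i‖)]
      _ = (1/2) * S + (1/2) * D := by
          rw [Finset.sum_add_distrib, ← Finset.mul_sum, ← Finset.mul_sum, ← hS, ← hD]
  have hmain : S ≤ (1/2) * S + (1/2) * D
      + h * ((2 * max Lf 0 + Lu + Lut / 2 + 1/2) * S) := by
    have hSsum : S = ∑ i, ⟪Y i - Y' i, X i - X' i⟫
        + h * ∑ i, ⟪Y i - Y' i, vEmp f u (Y i) Y - vEmp f u (Y' i) Y'⟫ := by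
      rw [hS, Finset.mul_sum, ← Finset.sum_add_distrib]
      exact Finset.sum_congr rfl fun i _ => key i
    have hhv := mul_le_mul_of_nonneg_left hV hh0.le
    linarith [hSsum, hW, hhv]
  have hc : 0 < 1 - (4 * max Lf 0 + 2 * Lu + Lut + 1) * h := by linarith
  rw [le_div_iff₀ hc]
  have expand : S * (1 - (4 * max Lf 0 + 2 * Lu + Lut + 1) * h)
      = S - 2 * (h * ((2 * max Lf 0 + Lu + Lut / 2 + 1/2) * S)) := by ring
  linarith
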